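/- (Scaled superlinear lower bound on the Legendre transform.) Assume Condition 1, and let K_DA, λ_DA be constants such that the quadratic expansion |H_c(x,α) − (1/2)‖α‖^2_{A(x)}| ≤ K_DA‖α‖^3 holds for ‖α‖ ≤ λ_DA uniformly in x, and let K_A = sup_x ‖A(x)‖. Set K̄ = λ_DA K_DA + K_A/2 and let L_c(x,β) = sup_α {⟨α,β⟩ − H_c(x,α)}. Then for any n, any G > 0 with √G/(a(n)√n) ≤ λ_DA, and all x, β ∈ R^d, d · a(n)^2 n · L_c(x,β) + d G K̄ ≥ √G · a(n)√n · ‖β‖. -/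

import Mathlib

open MeasureTheory ProbabilityTheory Filter Set
open scoped ENNReal RealInnerProductSpace BoundedContinuousFunction NNReal Topology

noncomputable section

abbrev EV (d : ℕ) := EuclideanSpace ℝ (Fin d)

def mvec {d : ℕ} (M : Matrix (Fin d) (Fin d) ℝ) (v : EV d) : EV d :=
  (EuclideanSpace.equiv (Fin d) ℝ).symm (M.mulVec (EuclideanSpace.equiv (Fin d) ℝ v))

structure Setup (d : ℕ) where
  μ : EV d → Measure (EV d)
  μ_prob : ∀ x, IsProbabilityMeasure (μ x)
  μ_meas : ∀ B : Set (EV d), MeasurableSet B → Measurable fun x => μ x B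
  μ_mean : ∀ x, (∫ y, y ∂(μ x)) = 0
  lam : ℝ
  Kmgf : ℝ
  lam_pos : 0 < lam
  mgf_bound : ∀ x α, ‖α‖ ≤ lam → Real.log (∫ y, Real.exp ⟪y, α⟫ ∂(μ x)) ≤ Kmgf
  μ_weakCont : ∀ f : EV d →ᵇ ℝ, Continuous fun x => ∫ y, f y ∂(μ x)
  b : EV d → EV d
  Kb : ℝ
  b_smooth : ContDiff ℝ 1 b
  b_bound : ∀ x, ‖b x‖ ≤ Kb
  Db_bound : ∀ x, ‖fderiv ℝ b x‖ ≤ Kb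
  x0 : EV d
  X0 : ℝ → EV d
  X0_cont : Continuous X0
  X0_eq : ∀ t ∈ Set.Icc (0:ℝ) 1, X0 t = x0 + ∫ s in (0:ℝ)..t, b (X0 s)

def covA {d : ℕ} (S : Setup d) (x : EV d) : Matrix (Fin d) (Fin d) ℝ :=
  Matrix.of fun i j => ∫ y, (y i) * (y j) ∂(S.μ x)

/-- The centered log moment generating function `H_c(x, α)`. -/
def Hc {d : ℕ} (S : Setup d) (x α : EV d) : ℝ :=
  Real.log (∫ y, Real.exp ⟪y, α⟫ ∂(S.μ x))

/-- The Legendre transform `L_c(x, β) = sup_α {⟨α, β⟩ − H_c(x, α)}` of `H_c(x, ·)`,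
as an extended nonnegative real (it is nonnegative since `H_c(x, 0) = 0`). -/
def Lc {d : ℕ} (S : Setup d) (x β : EV d) : ℝ≥0∞ :=
  ⨆ α : EV d, ENNReal.ofReal (⟪α, β⟫ - Hc S x α)

/-- **Scaled superlinear lower bound on the Legendre transform.** -/
theorem scaled_superlinear_lower_bound_Lc {d : ℕ} (S : Setup d)
    (KDA lamDA KA : ℝ) (hlam0 : 0 < lamDA) (hlam : lamDA ≤ S.lam)
    (hquad : ∀ x α, ‖α‖ ≤ lamDA →
      |Hc S x α - (1/2) * ⟪α, mvec (covA S x) α⟫| ≤ KDA * ‖α‖^3)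
    (hKA : ∀ x β, ⟪β, mvec (covA S x) β⟫ ≤ KA * ‖β‖^2)
    (a : ℕ → ℝ) (ha_pos : ∀ n, 0 < a n)
    (n : ℕ) (G : ℝ) (hG : 0 < G)
    (hGsmall : Real.sqrt G / (a n * Real.sqrt n) ≤ lamDA) :
    ∀ x β : EV d,
      ENNReal.ofReal (Real.sqrt G * (a n * Real.sqrt n) * ‖β‖) ≤
        (d : ℝ≥0∞) * ENNReal.ofReal (a n ^ 2 * n) * Lc S x β
          + ENNReal.ofReal ((d:ℝ) * G * (lamDA * KDA + KA / 2)) := by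
  intro x β
  rcases Nat.eq_zero_or_pos d with hd | hd
  · subst hd
    have hβ : ‖β‖ = 0 := by simp [EuclideanSpace.norm_eq]
    simp [hβ]
  rcases Nat.eq_zero_or_pos n with hn | hn
  · simp [hn]
  -- main case
  obtain ⟨r, hrdef⟩ : ∃ r : ℝ, r = Real.sqrt G / (a n * Real.sqrt n) := ⟨_, rfl⟩
  rw [← hrdef] at hGsmall
  have hn0 : (0:ℝ) < Real.sqrt n := Real.sqrt_pos.mpr (by exact_mod_cast hn)
  have han : 0 < a n * Real.sqrt n := mul_pos (ha_pos n) hn0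
  have hr0 : 0 ≤ r := hrdef ▸ div_nonneg (Real.sqrt_nonneg G) han.le
  have hsq : a n ^ 2 * (n:ℝ) = (a n * Real.sqrt n) ^ 2 := by
    rw [mul_pow, Real.sq_sqrt (by positivity)]
  have key1 : a n ^ 2 * (n:ℝ) * r = Real.sqrt G * (a n * Real.sqrt n) := by
    rw [hrdef, hsq]
    field_simp
  have key2 : a n ^ 2 * (n:ℝ) * r ^ 2 = G := by
    rw [hrdef, hsq, div_pow]
    rw [mul_div_cancel₀ _ (pow_ne_zero 2 han.ne'), Real.sq_sqrt hG.le]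
  obtain ⟨i⟩ : Nonempty (Fin d) := ⟨⟨0, hd⟩⟩
  have hKDA : 0 ≤ KDA := by
    have hnorm : ‖(lamDA • EuclideanSpace.single i (1:ℝ) : EV d)‖ = lamDA := by
      rw [norm_smul, EuclideanSpace.norm_single, norm_one, mul_one,
        Real.norm_eq_abs, abs_of_pos hlam0]
    have h := hquad S.x0 (lamDA • EuclideanSpace.single i (1:ℝ)) (le_of_eq hnorm)
    rw [hnorm] at h
    nlinarith [abs_nonneg (Hc S S.x0 (lamDA • EuclideanSpace.single i (1:ℝ)) -
      (1/2) * ⟪(lamDA • EuclideanSpace.single i (1:ℝ) : EV d),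
        mvec (covA S S.x0) (lamDA • EuclideanSpace.single i (1:ℝ))⟫),
      pow_pos hlam0 3]
  obtain ⟨u, hu1, huβ⟩ : ∃ u : EV d, ‖u‖ = 1 ∧ ⟪u, β⟫ = ‖β‖ := by
    rcases eq_or_ne β 0 with hβ | hβ
    · refine ⟨EuclideanSpace.single i (1:ℝ), ?_, ?_⟩
      · rw [EuclideanSpace.norm_single, norm_one]
      · simp [hβ]
    · refine ⟨‖β‖⁻¹ • β, ?_, ?_⟩
      · rw [norm_smul, norm_inv, norm_norm, inv_mul_cancel₀ (norm_ne_zero_iff.mpr hβ)]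
      · rw [real_inner_smul_left, real_inner_self_eq_norm_sq]
        field_simp
  have hα : ‖(r • u : EV d)‖ = r := by
    rw [norm_smul, hu1, mul_one, Real.norm_eq_abs, abs_of_nonneg hr0]
  have hrlam : r ≤ lamDA := hGsmall
  have hHc : Hc S x (r • u) ≤ (lamDA * KDA + KA / 2) * r ^ 2 := by
    have h1 := hquad x (r • u) (by rw [hα]; exact hrlam)
    rw [hα] at h1
    have h1' := (abs_le.mp h1).2
    have h2 := hKA x (r • u)
    rw [hα] at h2
    nlinarith [mul_nonneg (mul_nonneg hKDA (sub_nonneg.mpr hrlam)) (sq_nonneg r), h1', h2]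
  have hLc : ENNReal.ofReal (r * ‖β‖ - (lamDA * KDA + KA / 2) * r ^ 2) ≤ Lc S x β := by
    refine le_trans ?_ (le_iSup (fun α => ENNReal.ofReal (⟪α, β⟫ - Hc S x α)) (r • u))
    apply ENNReal.ofReal_le_ofReal
    have hip : ⟪(r • u : EV d), β⟫ = r * ‖β‖ := by rw [real_inner_smul_left, huβ]
    rw [hip]
    linarith
  have hd1 : (1:ℝ≥0∞) ≤ (d:ℝ≥0∞) := by exact_mod_cast hd
  calc ENNReal.ofReal (Real.sqrt G * (a n * Real.sqrt n) * ‖β‖)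
      = ENNReal.ofReal (a n ^ 2 * (n:ℝ) * (r * ‖β‖ - (lamDA * KDA + KA / 2) * r ^ 2) + G * (lamDA * KDA + KA / 2)) := by
        congr 1
        linear_combination (lamDA * KDA + KA / 2) * key2 - ‖β‖ * key1
    _ ≤ ENNReal.ofReal (a n ^ 2 * (n:ℝ) * (r * ‖β‖ - (lamDA * KDA + KA / 2) * r ^ 2))
          + ENNReal.ofReal (G * (lamDA * KDA + KA / 2)) := ENNReal.ofReal_add_le
    _ ≤ (d : ℝ≥0∞) * ENNReal.ofReal (a n ^ 2 * (n:ℝ)) * Lc S x β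
          + ENNReal.ofReal ((d:ℝ) * G * (lamDA * KDA + KA / 2)) := by
        refine add_le_add ?_ ?_
        · calc ENNReal.ofReal (a n ^ 2 * (n:ℝ) * (r * ‖β‖ - (lamDA * KDA + KA / 2) * r ^ 2))
              = ENNReal.ofReal (a n ^ 2 * (n:ℝ)) *
                  ENNReal.ofReal (r * ‖β‖ - (lamDA * KDA + KA / 2) * r ^ 2) :=
                ENNReal.ofReal_mul (by positivity)
            _ ≤ ENNReal.ofReal (a n ^ 2 * (n:ℝ)) * Lc S x β :=
                mul_le_mul_right hLc _
            _ ≤ (d : ℝ≥0∞) * ENNReal.ofReal (a n ^ 2 * (n:ℝ)) * Lc S x β := by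
                rw [mul_assoc]
                exact le_mul_of_one_le_left' hd1
        · rcases le_or_gt 0 (lamDA * KDA + KA / 2) with hK | hK
          · apply ENNReal.ofReal_le_ofReal
            have hd1' : (1:ℝ) ≤ (d:ℝ) := by exact_mod_cast hd
            nlinarith [mul_nonneg (mul_nonneg (sub_nonneg.mpr hd1') hG.le) hK]
          · have : G * (lamDA * KDA + KA / 2) ≤ 0 := by nlinarith
            rw [ENNReal.ofReal_eq_zero.mpr this]
            exact zero_le
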